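/- arXiv:0901.3565 — 4 statements merged into one kernel-verified Lean document; each statement's English description precedes it below -/
import Mathlib

section
/- Fix an integer ℓ > 2. If λ is an (ℓ,0)-JM partition, then for every residue i with 0 ≤ i < ℓ, no ladder contains both a removable i-box of λ and an addable i-box of λ with the removable box in a row strictly above the addable box. -/
noncomputable section

/-!
Common combinatorial definitions: partitions (English notation, rows indexed from 1),
Young diagrams, hooks, rim hooks, ladders, residues, crystal operators (classical and
ladder versions), locked boxes, regularization classes, dominance order.
-/

structure YPartition where
  part : ℕ → ℕ
  zero_at_zero : part 0 = 0
  antitone : ∀ i j : ℕ, 1 ≤ i → i ≤ j → part j ≤ part i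
  eventually_zero : ∃ N : ℕ, ∀ i : ℕ, N ≤ i → part i = 0

namespace YPartition

/-- The set of boxes of the Young diagram of `μ` (row, column), both indices ≥ 1. -/
def cells (μ : YPartition) : Set (ℕ × ℕ) :=
  {p | 1 ≤ p.1 ∧ 1 ≤ p.2 ∧ p.2 ≤ μ.part p.1}

/-- The length of column `b`: the number of rows containing a box in column `b`. -/
def colLen (μ : YPartition) (b : ℕ) : ℕ :=
  Nat.card {a : ℕ | 1 ≤ a ∧ b ≤ μ.part a}

/-- The arm of box `(a,b)`: boxes strictly to its right in its row. -/
def arm (μ : YPartition) (a b : ℕ) : ℕ := μ.part a - b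

/-- The leg of box `(a,b)`: boxes strictly below it in its column. -/
def leg (μ : YPartition) (a b : ℕ) : ℕ := μ.colLen b - a

/-- The hook length of the box `(a,b)`: arm + leg + 1. -/
def hook (μ : YPartition) (a b : ℕ) : ℕ := (μ.part a - b) + (μ.colLen b - a) + 1

/-- The number of boxes of `μ`. -/
def size (μ : YPartition) : ℕ := μ.cells.ncard

/-- The number of (nonzero) parts of `μ`. -/
def length (μ : YPartition) : ℕ := μ.colLen 1

/-- `μ` is an `(ℓ,0)`-JM partition: there are no boxes `(a,b)`, `(a,y)`, `(x,b)` with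
`ℓ ∣ hook (a,b)` while `ℓ` divides neither `hook (a,y)` nor `hook (x,b)`. -/
def IsJM (ℓ : ℕ) (μ : YPartition) : Prop :=
  ¬ ∃ a b y x : ℕ, (a, b) ∈ μ.cells ∧ (a, y) ∈ μ.cells ∧ (x, b) ∈ μ.cells ∧
    ℓ ∣ μ.hook a b ∧ ¬ ℓ ∣ μ.hook a y ∧ ¬ ℓ ∣ μ.hook x b

/-- Two boxes share an edge. -/
def BoxAdjacent (p q : ℕ × ℕ) : Prop :=
  (p.1 = q.1 ∧ (p.2 + 1 = q.2 ∨ q.2 + 1 = p.2)) ∨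
  (p.2 = q.2 ∧ (p.1 + 1 = q.1 ∨ q.1 + 1 = p.1))

/-- A set of boxes is connected (via shared edges, inside the set). -/
def SetConnected (S : Set (ℕ × ℕ)) : Prop :=
  ∀ p ∈ S, ∀ q ∈ S,
    Relation.ReflTransGen (fun x y => x ∈ S ∧ y ∈ S ∧ BoxAdjacent x y) p q

/-- `S` contains no 2 × 2 square of boxes. -/
def HasNoSquare (S : Set (ℕ × ℕ)) : Prop :=
  ¬ ∃ a b : ℕ, (a, b) ∈ S ∧ (a + 1, b) ∈ S ∧ (a, b + 1) ∈ S ∧ (a + 1, b + 1) ∈ S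

/-- `S` is a removable `ℓ`-rim hook of `μ`: a connected set of `ℓ` boxes of `μ` with no
2 × 2 square whose removal leaves the Young diagram of a partition. -/
def IsRimHook (ℓ : ℕ) (μ : YPartition) (S : Set (ℕ × ℕ)) : Prop :=
  S ⊆ μ.cells ∧ S.ncard = ℓ ∧ SetConnected S ∧ HasNoSquare S ∧
    ∃ ν : YPartition, ν.cells = μ.cells \ S

/-- `S` is contained in a single row. -/
def HorizontalHook (S : Set (ℕ × ℕ)) : Prop := ∃ a : ℕ, ∀ p ∈ S, p.1 = a

/-- `S` is contained in a single column. -/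
def VerticalHook (S : Set (ℕ × ℕ)) : Prop := ∃ b : ℕ, ∀ p ∈ S, p.2 = b

/-- Two sets of boxes are adjacent when some box of one shares an edge with a box of the other. -/
def SetsAdjacent (R S : Set (ℕ × ℕ)) : Prop := ∃ p ∈ R, ∃ q ∈ S, BoxAdjacent p q

/-- An `ℓ`-core: a partition with no removable `ℓ`-rim hook. -/
def IsCore (ℓ : ℕ) (μ : YPartition) : Prop := ¬ ∃ S : Set (ℕ × ℕ), IsRimHook ℓ μ S

/-- `p` and `q` lie on the same ladder: going down one column step the row increases
by `ℓ - 1`. -/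
def SameLadder (ℓ : ℕ) (p q : ℕ × ℕ) : Prop :=
  (q.1 : ℤ) - (p.1 : ℤ) = ((ℓ : ℤ) - 1) * ((p.2 : ℤ) - (q.2 : ℤ))

/-- The index of the ladder through `p`: the ladder through `(k,1)` has index `k`. -/
def ladderIdx (ℓ : ℕ) (p : ℕ × ℕ) : ℕ := p.1 + (ℓ - 1) * (p.2 - 1)

/-- The residue of position `(a,b)` is `b - a` mod `ℓ`. -/
def res (ℓ : ℕ) (p : ℕ × ℕ) : ℕ := (((p.2 : ℤ) - (p.1 : ℤ)) % (ℓ : ℤ)).toNat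

/-- `p` is a removable box of `μ`. -/
def Removable (μ : YPartition) (p : ℕ × ℕ) : Prop :=
  1 ≤ p.1 ∧ p.2 = μ.part p.1 ∧ μ.part (p.1 + 1) < p.2

/-- `p` is an addable box of `μ`. -/
def Addable (μ : YPartition) (p : ℕ × ℕ) : Prop :=
  1 ≤ p.1 ∧ p.2 = μ.part p.1 + 1 ∧ (p.1 = 1 ∨ p.2 ≤ μ.part (p.1 - 1))

/-- The removable `i`-boxes of `μ`. -/
def RemovableRes (ℓ i : ℕ) (μ : YPartition) : Set (ℕ × ℕ) :=
  {p | Removable μ p ∧ res ℓ p = i}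

/-- The addable `i`-boxes of `μ`. -/
def AddableRes (ℓ i : ℕ) (μ : YPartition) : Set (ℕ × ℕ) :=
  {p | Addable μ p ∧ res ℓ p = i}

/-- Ladder reading order (reflexive): ladders left to right, top to bottom within a ladder.
`LadderLE ℓ p q` means `p` is read before (or equal to) `q`. -/
def LadderLE (ℓ : ℕ) (p q : ℕ × ℕ) : Prop :=
  ladderIdx ℓ p < ladderIdx ℓ q ∨ (ladderIdx ℓ p = ladderIdx ℓ q ∧ p.1 ≤ q.1)

/-- Strict ladder reading order. -/
def LadderLT (ℓ : ℕ) (p q : ℕ × ℕ) : Prop :=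
  ladderIdx ℓ p < ladderIdx ℓ q ∨ (ladderIdx ℓ p = ladderIdx ℓ q ∧ p.1 < q.1)

/-- Classical reading order (reflexive): rows from bottom to top.
`RowLE p q` means `p` is read before (or equal to) `q`. -/
def RowLE (p q : ℕ × ℕ) : Prop := q.1 ≤ p.1

/-- Given a reading order `le`, a set `Rem` of `-` marks and `Add` of `+` marks, a `-` at `p`
survives the cancellation of adjacent `-+` pairs iff every interval of the reading word
starting at `p` contains strictly more `-`'s than `+`'s. -/
def NormalIn (le : ℕ × ℕ → ℕ × ℕ → Prop) (Rem Add : Set (ℕ × ℕ)) (p : ℕ × ℕ) : Prop :=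
  p ∈ Rem ∧ ∀ q ∈ Rem ∪ Add, le p q →
    (Add ∩ {s | le p s ∧ le s q}).ncard < (Rem ∩ {s | le p s ∧ le s q}).ncard

/-- A `+` at `q` survives the cancellation of adjacent `-+` pairs iff every interval of the
reading word ending at `q` contains strictly more `+`'s than `-`'s. -/
def ConormalIn (le : ℕ × ℕ → ℕ × ℕ → Prop) (Rem Add : Set (ℕ × ℕ)) (q : ℕ × ℕ) : Prop :=
  q ∈ Add ∧ ∀ p ∈ Rem ∪ Add, le p q →
    (Rem ∩ {s | le p s ∧ le s q}).ncard < (Add ∩ {s | le p s ∧ le s q}).ncard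

/-- Ladder normal `i`-box. -/
def LadderNormal (ℓ i : ℕ) (μ : YPartition) (p : ℕ × ℕ) : Prop :=
  NormalIn (LadderLE ℓ) (RemovableRes ℓ i μ) (AddableRes ℓ i μ) p

/-- Ladder conormal `i`-box. -/
def LadderConormal (ℓ i : ℕ) (μ : YPartition) (p : ℕ × ℕ) : Prop :=
  ConormalIn (LadderLE ℓ) (RemovableRes ℓ i μ) (AddableRes ℓ i μ) p

/-- Normal `i`-box (classical signature). -/
def ClassNormal (ℓ i : ℕ) (μ : YPartition) (p : ℕ × ℕ) : Prop :=
  NormalIn RowLE (RemovableRes ℓ i μ) (AddableRes ℓ i μ) p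

/-- Conormal `i`-box (classical signature). -/
def ClassConormal (ℓ i : ℕ) (μ : YPartition) (p : ℕ × ℕ) : Prop :=
  ConormalIn RowLE (RemovableRes ℓ i μ) (AddableRes ℓ i μ) p

/-- `ε̂_i(μ)`: number of ladder normal `i`-boxes. -/
def hatEps (ℓ i : ℕ) (μ : YPartition) : ℕ := {p | LadderNormal ℓ i μ p}.ncard

/-- `φ̂_i(μ)`: number of ladder conormal `i`-boxes. -/
def hatPhi (ℓ i : ℕ) (μ : YPartition) : ℕ := {p | LadderConormal ℓ i μ p}.ncard

/-- `ε_i(μ)`: number of normal `i`-boxes. -/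
def eps (ℓ i : ℕ) (μ : YPartition) : ℕ := {p | ClassNormal ℓ i μ p}.ncard

/-- `φ_i(μ)`: number of conormal `i`-boxes. -/
def phi (ℓ i : ℕ) (μ : YPartition) : ℕ := {p | ClassConormal ℓ i μ p}.ncard

/-- The ladder good `i`-box: the leftmost `-` of the reduced ladder `i`-signature. -/
def LadderGood (ℓ i : ℕ) (μ : YPartition) (p : ℕ × ℕ) : Prop :=
  LadderNormal ℓ i μ p ∧ ∀ q, LadderNormal ℓ i μ q → LadderLE ℓ p q

/-- The ladder cogood `i`-box: the rightmost `+` of the reduced ladder `i`-signature. -/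
def LadderCogood (ℓ i : ℕ) (μ : YPartition) (p : ℕ × ℕ) : Prop :=
  LadderConormal ℓ i μ p ∧ ∀ q, LadderConormal ℓ i μ q → LadderLE ℓ q p

/-- The good `i`-box (classical). -/
def ClassGood (ℓ i : ℕ) (μ : YPartition) (p : ℕ × ℕ) : Prop :=
  ClassNormal ℓ i μ p ∧ ∀ q, ClassNormal ℓ i μ q → RowLE p q

/-- The cogood `i`-box (classical). -/
def ClassCogood (ℓ i : ℕ) (μ : YPartition) (p : ℕ × ℕ) : Prop :=
  ClassConormal ℓ i μ p ∧ ∀ q, ClassConormal ℓ i μ q → RowLE q p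

/-- The ladder crystal operator `f̂_i` as a relation: `mu = f̂_i lam ≠ 0`. -/
def HatF (ℓ i : ℕ) (lam mu : YPartition) : Prop :=
  ∃ p, LadderCogood ℓ i lam p ∧ mu.cells = insert p lam.cells

/-- The ladder crystal operator `ê_i` as a relation: `mu = ê_i lam ≠ 0`. -/
def HatE (ℓ i : ℕ) (lam mu : YPartition) : Prop :=
  ∃ p, LadderGood ℓ i lam p ∧ mu.cells = lam.cells \ {p}

/-- The classical crystal operator `f̃_i` as a relation: `mu = f̃_i lam ≠ 0`. -/
def TildeF (ℓ i : ℕ) (lam mu : YPartition) : Prop :=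
  ∃ p, ClassCogood ℓ i lam p ∧ mu.cells = insert p lam.cells

/-- The classical crystal operator `ẽ_i` as a relation: `mu = ẽ_i lam ≠ 0`. -/
def TildeE (ℓ i : ℕ) (lam mu : YPartition) : Prop :=
  ∃ p, ClassGood ℓ i lam p ∧ mu.cells = lam.cells \ {p}

/-- `n`-fold composition of a relation. -/
def RelIter {α : Type} (r : α → α → Prop) : ℕ → α → α → Prop
  | 0 => fun a b => a = b
  | n + 1 => fun a b => ∃ c, r a c ∧ RelIter r n c b

/-- The empty partition. -/
def emptyP : YPartition where
  part := fun _ => 0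
  zero_at_zero := rfl
  antitone := fun _ _ _ _ => le_rfl
  eventually_zero := ⟨0, fun _ _ => rfl⟩

/-- `μ` is a node of the ladder crystal `B(Λ₀)^L`: it is obtained from the empty
partition by finitely many applications of the operators `f̂_i`, `0 ≤ i < ℓ`. -/
def LadderNode (ℓ : ℕ) (μ : YPartition) : Prop :=
  Relation.ReflTransGen (fun a b => ∃ i : ℕ, i < ℓ ∧ HatF ℓ i a b) emptyP μ

/-- The type I locking condition at `(a,b)`: every unoccupied position on the ladder of
`(a,b)` lying below it has an unoccupied position directly above it. -/
def LadderClear (ℓ : ℕ) (μ : YPartition) (a b : ℕ) : Prop :=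
  ∀ c d : ℕ, 1 ≤ c → 1 ≤ d → SameLadder ℓ (a, b) (c, d) → a < c →
    (c, d) ∉ μ.cells → (c - 1, d) ∉ μ.cells

/-- Locked boxes of `μ`. -/
inductive Locked (ℓ : ℕ) (μ : YPartition) : ℕ × ℕ → Prop where
  | typeI_top : ∀ b : ℕ, (1, b) ∈ μ.cells → LadderClear ℓ μ 1 b → Locked ℓ μ (1, b)
  | typeI_up : ∀ a b : ℕ, (a + 1, b) ∈ μ.cells → Locked ℓ μ (a, b) →
      LadderClear ℓ μ (a + 1) b → Locked ℓ μ (a + 1, b)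
  | typeII : ∀ a b b' : ℕ, (a, b) ∈ μ.cells → b < b' → Locked ℓ μ (a, b') → Locked ℓ μ (a, b)

/-- Number of boxes of `μ` on the `k`-th ladder. -/
def ladderCount (ℓ : ℕ) (μ : YPartition) (k : ℕ) : ℕ :=
  (μ.cells ∩ {p | ladderIdx ℓ p = k}).ncard

/-- `lam` and `mu` lie in the same regularization class: they have the same number of
boxes on every ladder. -/
def SameRegClass (ℓ : ℕ) (lam mu : YPartition) : Prop :=
  ∀ k : ℕ, ladderCount ℓ lam k = ladderCount ℓ mu k

/-- The boxes of `μ` are top-justified on each ladder. -/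
def TopJustified (ℓ : ℕ) (μ : YPartition) : Prop :=
  ∀ p ∈ μ.cells, ∀ q : ℕ × ℕ, 1 ≤ q.1 → 1 ≤ q.2 →
    ladderIdx ℓ q = ladderIdx ℓ p → q.1 < p.1 → q ∈ μ.cells

/-- `mu = R lam`: the regularization of `lam`, obtained by moving every box of `lam` to
the topmost unoccupied positions of its ladder. -/
def IsRegularization (ℓ : ℕ) (lam mu : YPartition) : Prop :=
  SameRegClass ℓ lam mu ∧ TopJustified ℓ mu

/-- Dominance order on partitions. -/
def DomLE (lam mu : YPartition) : Prop :=
  ∀ j : ℕ, ∑ i ∈ Finset.Icc 1 j, lam.part i ≤ ∑ i ∈ Finset.Icc 1 j, mu.part i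

/-- All (positive) positions on the `k`-th ladder. -/
def LadderPositions (ℓ k : ℕ) : Set (ℕ × ℕ) :=
  {p | 1 ≤ p.1 ∧ 1 ≤ p.2 ∧ ladderIdx ℓ p = k}

/-- The set of locked boxes of `μ`. -/
def lockedCells (ℓ : ℕ) (μ : YPartition) : Set (ℕ × ℕ) := {p | Locked ℓ μ p}

/-- The number of unlocked boxes of `μ` on the `k`-th ladder. -/
def unlockedCount (ℓ : ℕ) (μ : YPartition) (k : ℕ) : ℕ :=
  ((μ.cells ∩ LadderPositions ℓ k) \ lockedCells ℓ μ).ncard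

/-- The diagram `S μ`: locked boxes stay put, and on each ladder the unlocked boxes are
moved into the lowest positions of that ladder not occupied by locked boxes. -/
def SCells (ℓ : ℕ) (μ : YPartition) : Set (ℕ × ℕ) :=
  lockedCells ℓ μ ∪
    {p | 1 ≤ p.1 ∧ 1 ≤ p.2 ∧ p ∉ lockedCells ℓ μ ∧
      ((LadderPositions ℓ (ladderIdx ℓ p) ∩ {q | p.1 < q.1}) \ lockedCells ℓ μ).ncard
        < unlockedCount ℓ μ (ladderIdx ℓ p)}

/-- `μ` is `ℓ`-regular: no part occurs `ℓ` or more times. -/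
def IsRegular (ℓ : ℕ) (μ : YPartition) : Prop :=
  ∀ a : ℕ, 1 ≤ a → 0 < μ.part (a + (ℓ - 1)) → μ.part (a + (ℓ - 1)) < μ.part a

/-- Removal of a single horizontal or vertical `ℓ`-rim hook. -/
def RemoveHV (ℓ : ℕ) (lam mu : YPartition) : Prop :=
  ∃ S : Set (ℕ × ℕ), IsRimHook ℓ lam S ∧ (HorizontalHook S ∨ VerticalHook S) ∧
    mu.cells = lam.cells \ S

/-- Condition (1): every removable `ℓ`-rim hook is horizontal or vertical. -/
def Cond1 (ℓ : ℕ) (μ : YPartition) : Prop :=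
  ∀ S : Set (ℕ × ℕ), IsRimHook ℓ μ S → HorizontalHook S ∨ VerticalHook S

/-- Condition (2): no vertical (resp. horizontal) `ℓ`-rim hook `R` of `μ` together with an
adjacent horizontal (resp. vertical) `ℓ`-rim hook `S` of `μ \ R` . -/
def Cond2 (ℓ : ℕ) (μ : YPartition) : Prop :=
  ¬ ∃ (R S : Set (ℕ × ℕ)) (ν : YPartition), IsRimHook ℓ μ R ∧ ν.cells = μ.cells \ R ∧
    IsRimHook ℓ ν S ∧ SetsAdjacent R S ∧
    ((VerticalHook R ∧ HorizontalHook S) ∨ (HorizontalHook R ∧ VerticalHook S))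

/-- A generalized `ℓ`-partition: conditions (1) and (2) hold after removing any sequence of
horizontal and vertical `ℓ`-rim hooks (including the empty sequence). -/
def IsGenLPartition (ℓ : ℕ) (lam : YPartition) : Prop :=
  ∀ mu : YPartition, Relation.ReflTransGen (RemoveHV ℓ) lam mu → Cond1 ℓ mu ∧ Cond2 ℓ mu

/-- The `t`-th row (from the top) of the bottom block of the decomposition
`(μ, r, s, ρ, σ)`: the number of values `v ∈ [1, s+1]` whose column block still reaches
row `t`; column block `v` consists of `σ_v·ℓ + (s+1−v)(ℓ−1)` rows of length `≥ v`. -/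
def bottomPart (ℓ s : ℕ) (σ : YPartition) (t : ℕ) : ℕ :=
  ((Finset.Icc 1 (s + 1)).filter fun v => t ≤ σ.part v * ℓ + (s + 1 - v) * (ℓ - 1)).card

/-- The `i`-th part of the partition corresponding to the data `(μ, r, s, ρ, σ)`. -/
def decompPart (ℓ : ℕ) (mu : YPartition) (r s : ℕ) (ρ σ : YPartition) (i : ℕ) : ℕ :=
  if i = 0 then 0
  else if i ≤ r + 1 then s + mu.part 1 + (r + 1 - i) * (ℓ - 1) + ρ.part i * ℓ
  else if i ≤ r + max mu.length 1 then s + mu.part (i - r)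
  else bottomPart ℓ s σ (i - (r + max mu.length 1))

/-- Admissibility of the decomposition data `(μ, r, s, ρ, σ)`. -/
def GoodData (ℓ : ℕ) (mu : YPartition) (r s : ℕ) (ρ σ : YPartition) : Prop :=
  IsCore ℓ mu ∧ mu.part 1 < mu.part 2 + (ℓ - 1) ∧ mu.colLen 1 < mu.colLen 2 + (ℓ - 1) ∧
  ρ.length ≤ r + 1 ∧ σ.length ≤ s + 1 ∧
  (mu.cells = ∅ → ρ.part (r + 1) = 0 ∨ σ.part (s + 1) = 0)

/-- `lam ≈ (μ, r, s, ρ, σ)`. -/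
def Decomposes (ℓ : ℕ) (lam mu : YPartition) (r s : ℕ) (ρ σ : YPartition) : Prop :=
  ∀ i : ℕ, lam.part i = decompPart ℓ mu r s ρ σ i

/-- Removal of a single `ℓ`-rim hook. -/
def RemoveHook (ℓ : ℕ) (lam mu : YPartition) : Prop :=
  ∃ S : Set (ℕ × ℕ), IsRimHook ℓ lam S ∧ mu.cells = lam.cells \ S

/-- `lam` has `ℓ`-core `nu` and `ℓ`-weight `w`. -/
def HasCoreAndWeight (ℓ : ℕ) (lam nu : YPartition) (w : ℕ) : Prop :=
  IsCore ℓ nu ∧ RelIter (RemoveHook ℓ) w lam nu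

/-- An L-partition. -/
def IsLPartition (ℓ : ℕ) (lam : YPartition) : Prop :=
  ¬ ∃ p : ℕ × ℕ, p ∈ lam.cells ∧ ℓ ∣ lam.hook p.1 p.2 ∧
    (lam.arm p.1 p.2 < (ℓ - 1) * lam.leg p.1 p.2 ∨
     lam.leg p.1 p.2 < (ℓ - 1) * lam.arm p.1 p.2)

end YPartition

open YPartition
lemma colLen_eq_aux (lam : YPartition) (n m : ℕ)
    (hge : ∀ x, 1 ≤ x → x ≤ m → n ≤ lam.part x) (hlt : lam.part (m + 1) < n) :
    lam.colLen n = m := by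
  have hset : {x : ℕ | 1 ≤ x ∧ n ≤ lam.part x} = Set.Icc 1 m := by
    ext x
    simp only [Set.mem_setOf_eq, Set.mem_Icc]
    constructor
    · rintro ⟨hx1, hxn⟩
      refine ⟨hx1, ?_⟩
      by_contra h
      push_neg at h
      have := lam.antitone (m + 1) x (by omega) (by omega)
      omega
    · rintro ⟨hx1, hxm⟩
      exact ⟨hx1, hge x hx1 hxm⟩
  rw [YPartition.colLen, hset, Nat.card_eq_card_toFinset]
  simp

/-- if `λ` is an `(ℓ,0)`-JM partition, then no ladder contains a removable
`i`-box strictly above an addable `i`-box. -/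
theorem statement11 (ℓ : ℕ) (hℓ : 2 < ℓ) (lam : YPartition) (hJM : IsJM ℓ lam) :
    ∀ i : ℕ, i < ℓ →
      ¬ ∃ p q : ℕ × ℕ, p ∈ RemovableRes ℓ i lam ∧ q ∈ AddableRes ℓ i lam ∧
        SameLadder ℓ p q ∧ p.1 < q.1 := by
  intro i _hi
  rintro ⟨⟨a, b⟩, ⟨c, d⟩, ⟨⟨ha1, hpb, hrem⟩, -⟩, ⟨⟨hc1, hqd, hadd⟩, -⟩, hlad, hac⟩
  simp only at ha1 hpb hrem hc1 hqd hadd hac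
  unfold SameLadder at hlad
  simp only at hlad
  -- basic facts
  have hc2 : 2 ≤ c := by omega
  have hcd : d ≤ lam.part (c - 1) := by
    rcases hadd with h | h
    · omega
    · exact h
  have hd1 : 1 ≤ d := by omega
  -- from ladder equation: d < b and c = a + (ℓ-1)*(b-d)
  have hdb : d < b := by
    by_contra h
    push_neg at h
    have h1 : ((b : ℤ) - d) ≤ 0 := by
      have : (b : ℤ) ≤ d := by exact_mod_cast h
      omega
    have h2 : (0 : ℤ) ≤ (ℓ : ℤ) - 1 := by
      have : (3 : ℤ) ≤ (ℓ : ℤ) := by exact_mod_cast hℓ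
      omega
    have := mul_nonpos_of_nonneg_of_nonpos h2 h1
    have hac' : (0 : ℤ) < (c : ℤ) - a := by
      have : (a : ℤ) < c := by exact_mod_cast hac
      omega
    omega
  have hceq : c = a + (ℓ - 1) * (b - d) := by
    have h1 : ((ℓ - 1 : ℕ) : ℤ) = (ℓ : ℤ) - 1 := by
      have : 1 ≤ ℓ := by omega
      push_cast [Nat.cast_sub this]
      ring
    have h2 : ((b - d : ℕ) : ℤ) = (b : ℤ) - d := by
      push_cast [Nat.cast_sub (le_of_lt hdb)]
      ring
    have : (c : ℤ) = (a : ℤ) + ((ℓ - 1 : ℕ) : ℤ) * ((b - d : ℕ) : ℤ) := by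
      rw [h1, h2]; linarith
    exact_mod_cast this
  have hbd1 : 1 ≤ b - d := by omega
  have hcol_b : lam.colLen b = a := by
    apply colLen_eq_aux
    · intro x hx1 hxa
      have := lam.antitone x a hx1 hxa
      omega
    · omega
  have hcol_d : lam.colLen d = c - 1 := by
    apply colLen_eq_aux
    · intro x hx1 hxc
      have := lam.antitone x (c - 1) hx1 hxc
      omega
    · have : c - 1 + 1 = c := by omega
      rw [this]
      omega
  -- hook lengths
  have hook_ab : lam.hook a b = 1 := by
    unfold YPartition.hook
    rw [hcol_b]
    omega
  have hook_xd : ∀ x, 1 ≤ x → x ≤ c - 1 →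
      lam.hook x d = (lam.part x - d) + (c - 1 - x) + 1 := by
    intro x _ _
    unfold YPartition.hook
    rw [hcol_d]
  have hpart_ge : ∀ x, 1 ≤ x → x ≤ c - 1 → d ≤ lam.part x := by
    intro x hx1 hxc
    have := lam.antitone x (c - 1) hx1 hxc
    omega
  have hac1 : a ≤ c - 1 := by omega
  have hook_ad : lam.hook a d = ℓ * (b - d) := by
    rw [hook_xd a ha1 hac1]
    have hpa : lam.part a = b := hpb.symm
    have h1 : (lam.part a - d) + (c - 1 - a) + 1 = (b - d) + (ℓ - 1) * (b - d) := by
      omega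
    rw [h1]
    have h2 : (b - d) + (ℓ - 1) * (b - d) = ((ℓ - 1) + 1) * (b - d) := by ring
    rw [h2]
    congr 1
    omega
  -- cells memberships
  have cell_ad : (a, d) ∈ lam.cells := ⟨ha1, hd1, by simp only; omega⟩
  have cell_ab : (a, b) ∈ lam.cells := ⟨ha1, by omega, by simp only; omega⟩
  have cell_xd : ∀ x, 1 ≤ x → x ≤ c - 1 → (x, d) ∈ lam.cells := by
    intro x hx1 hxc
    exact ⟨hx1, hd1, hpart_ge x hx1 hxc⟩
  have hdvd_ad : ℓ ∣ lam.hook a d := by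
    rw [hook_ad]; exact Dvd.intro _ rfl
  have hnd_ab : ¬ ℓ ∣ lam.hook a b := by
    rw [hook_ab]
    intro h
    have := Nat.le_of_dvd one_pos h
    omega
  -- JM forces all hooks in column d divisible
  have hdvd_col : ∀ x, 1 ≤ x → x ≤ c - 1 → ℓ ∣ lam.hook x d := by
    intro x hx1 hxc
    by_contra h
    exact hJM ⟨a, d, b, x, cell_ad, cell_ab, cell_xd x hx1 hxc, hdvd_ad, hnd_ab, h⟩
  -- downward induction on the column
  have key : ∀ k, k ≤ c - 1 - a → ℓ * (k + 1) ≤ lam.hook (c - 1 - k) d := by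
    intro k
    induction k with
    | zero =>
      intro _
      have hx1 : 1 ≤ c - 1 := by omega
      have hdvd := hdvd_col (c - 1) hx1 le_rfl
      have hpos : 0 < lam.hook (c - 1) d := by
        rw [hook_xd (c - 1) hx1 le_rfl]; omega
      simpa using Nat.le_of_dvd hpos hdvd
    | succ k ih =>
      intro hk
      have hk' : k ≤ c - 1 - a := by omega
      have ihv := ih hk'
      set j := c - 1 - (k + 1) with hj
      have hj1 : 1 ≤ j := by omega
      have hjc : j ≤ c - 1 := by omega
      have hj2 : c - 1 - k = j + 1 := by omega
      rw [hj2] at ihv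
      have hjp1 : j + 1 ≤ c - 1 := by omega
      -- strict decrease
      have hlt : lam.hook (j + 1) d < lam.hook j d := by
        rw [hook_xd j hj1 hjc, hook_xd (j + 1) (by omega) hjp1]
        have h1 := lam.antitone j (j + 1) hj1 (by omega)
        have h2 := hpart_ge (j + 1) (by omega) hjp1
        have h3 := hpart_ge j hj1 hjc
        omega
      have hd1' := hdvd_col j hj1 hjc
      have hd2' := hdvd_col (j + 1) (by omega) hjp1
      have hsub : ℓ ∣ lam.hook j d - lam.hook (j + 1) d := Nat.dvd_sub hd1' hd2'
      have hsubpos : 0 < lam.hook j d - lam.hook (j + 1) d := by omega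
      have := Nat.le_of_dvd hsubpos hsub
      have : ℓ * (k + 1) + ℓ ≤ lam.hook j d := by omega
      calc ℓ * (k + 1 + 1) = ℓ * (k + 1) + ℓ := by ring
        _ ≤ lam.hook j d := this
  -- conclude
  have hfin := key (c - 1 - a) le_rfl
  have heq : c - 1 - (c - 1 - a) = a := by omega
  rw [heq, hook_ad] at hfin
  have hle : c - 1 - a + 1 = (ℓ - 1) * (b - d) := by omega
  rw [hle] at hfin
  have h2 : 2 * (b - d) ≤ (ℓ - 1) * (b - d) := Nat.mul_le_mul_right _ (by omega)
  have h3 : ℓ * (2 * (b - d)) ≤ ℓ * ((ℓ - 1) * (b - d)) :=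
    Nat.mul_le_mul_left _ h2
  have h4 : ℓ * ((ℓ - 1) * (b - d)) ≤ ℓ * (b - d) := hfin
  have h6 : ℓ * (2 * (b - d)) = 2 * (ℓ * (b - d)) := by ring
  have hpos : 0 < ℓ * (b - d) := Nat.mul_pos (by omega) (by omega)
  omega
end
end

section
/- Fix an integer ℓ > 2. If λ is an (ℓ,0)-JM partition, then for every residue i with 0 ≤ i < ℓ, the ladder i-signature of λ equals its reduced ladder i-signature; that is, the ladder i-signature already has the form +⋯+−⋯− (every + precedes every − in the ladder reading order), so no −+ cancellation occurs. -/
noncomputable section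

open YPartition

lemma mem_cells (μ : YPartition) {a b : ℕ} :
    (a, b) ∈ μ.cells ↔ 1 ≤ a ∧ 1 ≤ b ∧ b ≤ μ.part a := Iff.rfl

lemma colSet_finite (μ : YPartition) {b : ℕ} (hb : 1 ≤ b) :
    {a : ℕ | 1 ≤ a ∧ b ≤ μ.part a}.Finite := by
  obtain ⟨N, hN⟩ := μ.eventually_zero
  apply (Set.finite_Icc 1 N).subset
  rintro x ⟨hx1, hxb⟩
  refine ⟨hx1, ?_⟩
  by_contra h
  push_neg at h
  have := hN x (le_of_lt h)
  omega

lemma le_colLen_iff (μ : YPartition) {a b : ℕ} (ha : 1 ≤ a) (hb : 1 ≤ b) :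
    a ≤ μ.colLen b ↔ b ≤ μ.part a := by
  have hcard : μ.colLen b = {x : ℕ | 1 ≤ x ∧ b ≤ μ.part x}.ncard := by
    rw [colLen, Nat.card_coe_set_eq]
  constructor
  · intro h
    by_contra hba
    push_neg at hba
    have hsub : {x : ℕ | 1 ≤ x ∧ b ≤ μ.part x} ⊆ Set.Icc 1 (a - 1) := by
      rintro x ⟨hx1, hxb⟩
      refine ⟨hx1, ?_⟩
      by_contra hxa
      push_neg at hxa
      have := μ.antitone a x ha (by omega)
      omega
    have hle := Set.ncard_le_ncard hsub (Set.finite_Icc _ _)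
    rw [← Finset.coe_Icc, Set.ncard_coe_finset, Nat.card_Icc] at hle
    omega
  · intro h
    have hsub : Set.Icc 1 a ⊆ {x : ℕ | 1 ≤ x ∧ b ≤ μ.part x} := by
      rintro x ⟨hx1, hxa⟩
      exact ⟨hx1, le_trans h (μ.antitone x a hx1 hxa)⟩
    have hle := Set.ncard_le_ncard hsub (colSet_finite μ hb)
    rw [← Finset.coe_Icc, Set.ncard_coe_finset, Nat.card_Icc] at hle
    omega

lemma colLen_eq_of (μ : YPartition) {b c : ℕ} (hb : 1 ≤ b)
    (h1 : b ≤ μ.part c) (h2 : μ.part (c + 1) < b) : μ.colLen b = c := by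
  have hc1 : 1 ≤ c := by
    by_contra h
    push_neg at h
    interval_cases c
    have := μ.zero_at_zero
    omega
  have hge : c ≤ μ.colLen b := (le_colLen_iff μ hc1 hb).2 h1
  have hlt : ¬ (c + 1 ≤ μ.colLen b) := fun h =>
    absurd ((le_colLen_iff μ (by omega) hb).1 h) (by omega)
  omega

lemma colLen_succ_le (μ : YPartition) {b : ℕ} (hb : 1 ≤ b) :
    μ.colLen (b + 1) ≤ μ.colLen b := by
  rcases Nat.eq_zero_or_pos (μ.colLen (b + 1)) with h | h
  · omega
  · have h1 := (le_colLen_iff μ h (by omega)).1 le_rfl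
    exact (le_colLen_iff μ h hb).2 (by omega)

lemma hook_row_strict (μ : YPartition) {a b : ℕ} (h1 : (a, b) ∈ μ.cells)
    (h2 : (a, b + 1) ∈ μ.cells) : μ.hook a (b + 1) < μ.hook a b := by
  obtain ⟨ha, hb, hba⟩ := (mem_cells μ).1 h1
  obtain ⟨-, -, hba2⟩ := (mem_cells μ).1 h2
  have hc1 : a ≤ μ.colLen (b + 1) := (le_colLen_iff μ ha (by omega)).2 hba2
  have hc2 : μ.colLen (b + 1) ≤ μ.colLen b := colLen_succ_le μ hb
  unfold hook
  omega

lemma hook_col_strict (μ : YPartition) {a b : ℕ} (h1 : (a, b) ∈ μ.cells)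
    (h2 : (a + 1, b) ∈ μ.cells) : μ.hook (a + 1) b < μ.hook a b := by
  obtain ⟨ha, hb, hba⟩ := (mem_cells μ).1 h1
  obtain ⟨-, -, hba2⟩ := (mem_cells μ).1 h2
  have hp : μ.part (a + 1) ≤ μ.part a := μ.antitone a (a + 1) ha (by omega)
  have hc1 : a + 1 ≤ μ.colLen b := (le_colLen_iff μ (by omega) hb).2 hba2
  unfold hook
  omega

lemma dvd_step {ℓ n k : ℕ} (h : ℓ ∣ n) (hlt : k * ℓ < n) : (k + 1) * ℓ ≤ n := by
  obtain ⟨m, rfl⟩ := h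
  rcases Nat.eq_zero_or_pos ℓ with rfl | hp
  · omega
  · have hk : k < m := by
      rw [mul_comm] at hlt
      exact Nat.lt_of_mul_lt_mul_left hlt
    calc (k + 1) * ℓ ≤ m * ℓ := Nat.mul_le_mul_right _ hk
      _ = ℓ * m := Nat.mul_comm _ _

lemma row_ge (μ : YPartition) {ℓ a : ℕ} (ha : 1 ≤ a)
    (H : ∀ y, (a, y) ∈ μ.cells → ℓ ∣ μ.hook a y) :
    ∀ t, t + 1 ≤ μ.part a → (t + 1) * ℓ ≤ μ.hook a (μ.part a - t) := by
  intro t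
  induction t with
  | zero =>
    intro h
    have hc : (a, μ.part a) ∈ μ.cells := (mem_cells μ).2 ⟨ha, by omega, le_rfl⟩
    have hd := H _ hc
    have h1 : 1 ≤ μ.hook a (μ.part a) := by unfold hook; omega
    have := dvd_step hd (by omega : 0 * ℓ < μ.hook a (μ.part a))
    simpa using this
  | succ t ih =>
    intro h
    have ih' := ih (by omega)
    have hcell1 : (a, μ.part a - (t + 1)) ∈ μ.cells := (mem_cells μ).2 ⟨ha, by omega, by omega⟩
    have hcell2 : (a, μ.part a - (t + 1) + 1) ∈ μ.cells := (mem_cells μ).2 ⟨ha, by omega, by omega⟩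
    have hstep := hook_row_strict μ hcell1 hcell2
    have he : μ.part a - (t + 1) + 1 = μ.part a - t := by omega
    rw [he] at hstep
    exact dvd_step (H _ hcell1) (lt_of_le_of_lt ih' hstep)

lemma col_ge (μ : YPartition) {ℓ b : ℕ} (hb : 1 ≤ b)
    (H : ∀ x, (x, b) ∈ μ.cells → ℓ ∣ μ.hook x b) :
    ∀ t, t + 1 ≤ μ.colLen b → (t + 1) * ℓ ≤ μ.hook (μ.colLen b - t) b := by
  intro t
  induction t with
  | zero =>
    intro h
    have hpb : b ≤ μ.part (μ.colLen b) := (le_colLen_iff μ h hb).1 le_rfl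
    have hc : (μ.colLen b, b) ∈ μ.cells := (mem_cells μ).2 ⟨h, hb, hpb⟩
    have hd := H _ hc
    have h1 : 1 ≤ μ.hook (μ.colLen b) b := by unfold hook; omega
    have := dvd_step hd (by omega : 0 * ℓ < μ.hook (μ.colLen b) b)
    simpa using this
  | succ t ih =>
    intro h
    have ih' := ih (by omega)
    have hr1 : 1 ≤ μ.colLen b - (t + 1) := by omega
    have hp1 : b ≤ μ.part (μ.colLen b - (t + 1)) :=
      (le_colLen_iff μ hr1 hb).1 (by omega)
    have hp2 : b ≤ μ.part (μ.colLen b - (t + 1) + 1) :=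
      (le_colLen_iff μ (by omega) hb).1 (by omega)
    have hcell1 : (μ.colLen b - (t + 1), b) ∈ μ.cells := (mem_cells μ).2 ⟨hr1, hb, hp1⟩
    have hcell2 : (μ.colLen b - (t + 1) + 1, b) ∈ μ.cells := (mem_cells μ).2 ⟨by omega, hb, hp2⟩
    have hstep := hook_col_strict μ hcell1 hcell2
    have he : μ.colLen b - (t + 1) + 1 = μ.colLen b - t := by omega
    rw [he] at hstep
    exact dvd_step (H _ hcell1) (lt_of_le_of_lt ih' hstep)

lemma arith1 {ℓ a c p2 q2 : ℕ} (hℓ : 2 < ℓ) (h1 : 1 ≤ q2) (h2 : q2 < p2)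
    (hac : a < c) (key : (p2 - q2) * ℓ ≤ (p2 - q2 - 1) + (c - a) + 1) :
    a + (ℓ - 1) * (p2 - 1) ≤ c + (ℓ - 1) * (q2 - 1) := by
  obtain ⟨m, rfl⟩ : ∃ m, ℓ = m + 3 := ⟨ℓ - 3, by omega⟩
  obtain ⟨d, rfl⟩ : ∃ d, p2 = q2 + d + 1 := ⟨p2 - q2 - 1, by omega⟩
  have e1 : (q2 + d + 1 - q2) * (m + 3) = (m + 2) * (d + 1) + d + 1 := by
    have h : q2 + d + 1 - q2 = d + 1 := by omega
    rw [h]; ring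
  have e3 : q2 + d + 1 - q2 - 1 = d := by omega
  rw [e1, e3] at key
  have e2 : (m + 3 - 1) * (q2 + d + 1 - 1) = (m + 3 - 1) * (q2 - 1) + (m + 2) * (d + 1) := by
    have h3 : m + 3 - 1 = m + 2 := by omega
    have h4 : q2 + d + 1 - 1 = (q2 - 1) + (d + 1) := by omega
    rw [h3, h4, Nat.mul_add]
  rw [e2]
  generalize (m + 2) * (d + 1) = X at key ⊢
  generalize (m + 3 - 1) * (q2 - 1) = Y
  omega

lemma arith2 {ℓ a c p2 q2 : ℕ} (hℓ : 2 < ℓ) (h1 : 1 ≤ p2) (h2 : p2 ≤ q2)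
    (hac : c < a) (key : (a - c) * ℓ ≤ (q2 - p2) + (a - 1 - c) + 1) :
    a + (ℓ - 1) * (p2 - 1) < c + (ℓ - 1) * (q2 - 1) := by
  obtain ⟨m, rfl⟩ : ∃ m, ℓ = m + 3 := ⟨ℓ - 3, by omega⟩
  obtain ⟨k, rfl⟩ : ∃ k, a = c + k + 1 := ⟨a - c - 1, by omega⟩
  obtain ⟨e, rfl⟩ : ∃ e, q2 = p2 + e := ⟨q2 - p2, by omega⟩
  have e0 : c + k + 1 - c = k + 1 := by omega
  have e0' : p2 + e - p2 = e := by omega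
  have e0'' : c + k + 1 - 1 - c = k := by omega
  rw [e0, e0', e0''] at key
  have e1 : (k + 1) * (m + 3) = (k + 1) * (m + 2) + k + 1 := by ring
  rw [e1] at key
  have h3 : m + 3 - 1 = m + 2 := by omega
  rw [h3]
  have e2 : (m + 2) * (p2 + e - 1) = (m + 2) * (p2 - 1) + (m + 2) * e := by
    have h4 : p2 + e - 1 = (p2 - 1) + e := by omega
    rw [h4, Nat.mul_add]
  rw [e2]
  have e3 : 2 * e ≤ (m + 2) * e := Nat.mul_le_mul_right e (by omega)
  have e4 : k + 1 ≤ (k + 1) * (m + 2) := by nlinarith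
  generalize (k + 1) * (m + 2) = Z at key e4
  generalize (m + 2) * e = Y at e3 ⊢
  generalize (m + 2) * (p2 - 1) = X
  omega

/-- if `λ` is an `(ℓ,0)`-JM partition, its ladder `i`-signature is already
reduced: every `+` (addable `i`-box) strictly precedes every `−` (removable `i`-box) in
the ladder reading order. -/
theorem statement12 (ℓ : ℕ) (hℓ : 2 < ℓ) (lam : YPartition) (hJM : IsJM ℓ lam) :
    ∀ i : ℕ, i < ℓ →
      ∀ p ∈ AddableRes ℓ i lam, ∀ q ∈ RemovableRes ℓ i lam, LadderLT ℓ p q := by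
  intro i hi p hp q hq
  obtain ⟨⟨ha1, hp2, hpadd⟩, hpres⟩ := hp
  obtain ⟨⟨hc1, hq2, hqrem⟩, hqres⟩ := hq
  have hres : res ℓ p = res ℓ q := hpres.trans hqres.symm
  have hz : ((ℓ : ℤ)) ≠ 0 := by exact_mod_cast (by omega : ℓ ≠ 0)
  have hm1 := Int.emod_nonneg ((p.2 : ℤ) - p.1) hz
  have hm2 := Int.emod_nonneg ((q.2 : ℤ) - q.1) hz
  have hmod : ((p.2 : ℤ) - p.1) % ℓ = ((q.2 : ℤ) - q.1) % ℓ := by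
    unfold res at hres; omega
  have hdvd : (ℓ : ℤ) ∣ ((q.2 : ℤ) - q.1) - ((p.2 : ℤ) - p.1) := Int.ModEq.dvd hmod
  have hq2pos : 1 ≤ q.2 := by omega
  have hcolq : lam.colLen q.2 = q.1 := colLen_eq_of lam hq2pos (by omega) (by omega)
  have hhookq : lam.hook q.1 q.2 = 1 := by unfold YPartition.hook; rw [hcolq]; omega
  have hnd1 : ¬ ℓ ∣ lam.hook q.1 q.2 := by
    rw [hhookq]; intro hdd; have := Nat.le_of_dvd one_pos hdd; omega
  rcases lt_trichotomy p.1 q.1 with hac | hac | hac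
  · -- p.1 < q.1
    have hcc : lam.part q.1 ≤ lam.part p.1 := lam.antitone p.1 q.1 ha1 (le_of_lt hac)
    have hq2a : q.2 ≤ lam.part p.1 := by omega
    have hhook : lam.hook p.1 q.2 = (lam.part p.1 - q.2) + (q.1 - p.1) + 1 := by
      unfold YPartition.hook; rw [hcolq]
    have hdvdhook : ℓ ∣ lam.hook p.1 q.2 := by
      rw [← Int.natCast_dvd_natCast]
      have hzz : (lam.hook p.1 q.2 : ℤ) = ((p.2 : ℤ) - p.1) - ((q.2 : ℤ) - q.1) := by
        rw [hhook]; omega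
      rw [hzz]
      have h9 := dvd_neg.mpr hdvd
      rwa [neg_sub] at h9
    have Hrow : ∀ y, (p.1, y) ∈ lam.cells → ℓ ∣ lam.hook p.1 y := by
      by_contra hco
      push_neg at hco
      obtain ⟨y, hyc, hyd⟩ := hco
      exact hJM ⟨p.1, q.2, y, q.1, (mem_cells lam).2 ⟨ha1, hq2pos, hq2a⟩, hyc,
        (mem_cells lam).2 ⟨hc1, hq2pos, by omega⟩, hdvdhook, hyd, hnd1⟩
    have key := row_ge lam ha1 Hrow (lam.part p.1 - q.2) (by omega)
    have he : lam.part p.1 - (lam.part p.1 - q.2) = q.2 := by omega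
    rw [he, hhook] at key
    have key' : (p.2 - q.2) * ℓ ≤ (p.2 - q.2 - 1) + (q.1 - p.1) + 1 := by
      have h5 : p.2 - q.2 = lam.part p.1 - q.2 + 1 := by omega
      have h6 : p.2 - q.2 - 1 = lam.part p.1 - q.2 := by omega
      rw [h6, h5]; exact key
    have hle : p.1 + (ℓ - 1) * (p.2 - 1) ≤ q.1 + (ℓ - 1) * (q.2 - 1) :=
      arith1 hℓ hq2pos (by omega) hac key'
    have hle' : ladderIdx ℓ p ≤ ladderIdx ℓ q := hle
    rcases hle'.lt_or_eq with h | h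
    · exact Or.inl h
    · exact Or.inr ⟨h, hac⟩
  · -- p.1 = q.1 : impossible
    exfalso
    have hpp : lam.part p.1 = lam.part q.1 := by rw [hac]
    have hd1 : ((q.2 : ℤ) - q.1) - ((p.2 : ℤ) - p.1) = -1 := by omega
    rw [hd1] at hdvd
    have h2 : (ℓ : ℤ) ∣ 1 := dvd_neg.mp hdvd
    have h3 := Int.le_of_dvd (by norm_num) h2
    omega
  · -- q.1 < p.1
    have hc2a : q.1 + 1 ≤ p.1 := hac
    have h2 : lam.part p.1 ≤ lam.part (q.1 + 1) := lam.antitone (q.1 + 1) p.1 (by omega) hc2a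
    have hple : p.2 ≤ q.2 := by omega
    have hup : p.2 ≤ lam.part (p.1 - 1) := by
      rcases hpadd with h | h
      · omega
      · exact h
    have hcol2 : lam.colLen p.2 = p.1 - 1 := by
      apply colLen_eq_of lam (by omega) hup
      have h7 : p.1 - 1 + 1 = p.1 := by omega
      rw [h7]; omega
    have hhook2 : lam.hook q.1 p.2 = (q.2 - p.2) + (p.1 - 1 - q.1) + 1 := by
      unfold YPartition.hook; rw [hcol2, ← hq2]
    have hdvdhook : ℓ ∣ lam.hook q.1 p.2 := by
      rw [← Int.natCast_dvd_natCast]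
      have hzz : (lam.hook q.1 p.2 : ℤ) = ((q.2 : ℤ) - q.1) - ((p.2 : ℤ) - p.1) := by
        rw [hhook2]; omega
      rw [hzz]; exact hdvd
    have Hcol : ∀ x, (x, p.2) ∈ lam.cells → ℓ ∣ lam.hook x p.2 := by
      by_contra hco
      push_neg at hco
      obtain ⟨x, hxc, hxd⟩ := hco
      exact hJM ⟨q.1, p.2, q.2, x, (mem_cells lam).2 ⟨hc1, by omega, by omega⟩,
        (mem_cells lam).2 ⟨hc1, hq2pos, by omega⟩, hxc, hdvdhook, hnd1, hxd⟩
    have key := col_ge lam (by omega : 1 ≤ p.2) Hcol (p.1 - 1 - q.1) (by rw [hcol2]; omega)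
    have he : lam.colLen p.2 - (p.1 - 1 - q.1) = q.1 := by rw [hcol2]; omega
    rw [he, hhook2] at key
    have key' : (p.1 - q.1) * ℓ ≤ (q.2 - p.2) + (p.1 - 1 - q.1) + 1 := by
      have h8 : p.1 - q.1 = p.1 - 1 - q.1 + 1 := by omega
      rw [h8]; exact key
    have hlt : p.1 + (ℓ - 1) * (p.2 - 1) < q.1 + (ℓ - 1) * (q.2 - 1) :=
      arith2 hℓ (by omega) hple hac key'
    exact Or.inl hlt
end
end

section
/- Fix an integer ℓ > 2 and a residue i with 0 ≤ i < ℓ. If λ is an (ℓ,0)-JM partition, then \hat f_i^{k} λ is not an (ℓ,0)-JM partition for every k with 0 < k < \hatφ_i(λ) − 1, and \hat e_i^{k} λ is not an (ℓ,0)-JM partition for every k with 1 < k < \hatε_i(λ). -/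
noncomputable section

open YPartition

namespace St14
open YPartition

lemma nat_eq_of_le_iff {x y : ℕ} (h : ∀ b, 1 ≤ b → (b ≤ x ↔ b ≤ y)) : x = y := by
  have h1 := h (x + 1) (by omega)
  have h2 := h (y + 1) (by omega)
  omega

lemma part_anti (ν : YPartition) {a b : ℕ} (ha : 1 ≤ a) (hab : a ≤ b) :
    ν.part b ≤ ν.part a := ν.antitone a b ha hab

lemma res_dvd' {ℓ : ℕ} (hl : 0 < ℓ) {a b r c : ℕ} (h : res ℓ (a, b) = res ℓ (r, c)) :
    (ℓ : ℤ) ∣ ((b : ℤ) - a) - ((c : ℤ) - r) := by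
  have hl' : (ℓ : ℤ) ≠ 0 := by exact_mod_cast hl.ne'
  have hp : (0:ℤ) ≤ ((b : ℤ) - a) % ℓ := Int.emod_nonneg _ hl'
  have hq : (0:ℤ) ≤ ((c : ℤ) - r) % ℓ := Int.emod_nonneg _ hl'
  have h2 : ((b : ℤ) - a) % ℓ = ((c : ℤ) - r) % ℓ := by
    have h3 := congrArg (fun n : ℕ => (n : ℤ)) h
    simp only [res] at h3
    rwa [Int.toNat_of_nonneg hp, Int.toNat_of_nonneg hq] at h3
  exact dvd_sub_comm.mp (Int.ModEq.dvd h2)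

lemma colLen_eq (ν : YPartition) {b r : ℕ}
    (h1 : ∀ a, 1 ≤ a → a ≤ r → b ≤ ν.part a)
    (h2 : ∀ a, r < a → ν.part a < b) : ν.colLen b = r := by
  have hset : {a : ℕ | 1 ≤ a ∧ b ≤ ν.part a} = Set.Icc 1 r := by
    ext a
    simp only [Set.mem_setOf_eq, Set.mem_Icc]
    constructor
    · rintro ⟨ha, hba⟩
      refine ⟨ha, ?_⟩
      by_contra hc
      have := h2 a (by omega)
      omega
    · rintro ⟨ha, har⟩
      exact ⟨ha, h1 a ha har⟩
  unfold YPartition.colLen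
  rw [hset]
  simp [Nat.card_Icc]

lemma addableRes_finite (ℓ i : ℕ) (ν : YPartition) : (AddableRes ℓ i ν).Finite := by
  obtain ⟨N, hN⟩ := ν.eventually_zero
  apply Set.Finite.subset ((Set.finite_Icc 1 (N + 1)).prod (Set.finite_Icc 1 (ν.part 1 + 1)))
  rintro ⟨a, b⟩ ⟨⟨ha, hb, hcond⟩, -⟩
  dsimp only at ha hb hcond
  simp only [Set.mem_prod, Set.mem_Icc]
  have hpa : ν.part a ≤ ν.part 1 := part_anti ν le_rfl ha
  refine ⟨⟨ha, ?_⟩, by omega, by omega⟩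
  by_contra hc
  rcases hcond with h1 | h1
  · omega
  · have : ν.part (a - 1) = 0 := hN _ (by omega)
    omega

lemma removableRes_finite (ℓ i : ℕ) (ν : YPartition) : (RemovableRes ℓ i ν).Finite := by
  obtain ⟨N, hN⟩ := ν.eventually_zero
  apply Set.Finite.subset ((Set.finite_Icc 1 (N + 1)).prod (Set.finite_Icc 1 (ν.part 1 + 1)))
  rintro ⟨a, b⟩ ⟨⟨ha, hb, hlt⟩, -⟩
  dsimp only at ha hb hlt
  simp only [Set.mem_prod, Set.mem_Icc]
  have hpa : ν.part a ≤ ν.part 1 := part_anti ν le_rfl ha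
  refine ⟨⟨ha, ?_⟩, by omega, by omega⟩
  by_contra hc
  have : ν.part a = 0 := hN _ (by omega)
  omega

lemma part_of_insert {lam mu : YPartition} {r c : ℕ} (hr : 1 ≤ r) (hc : lam.part r + 1 = c)
    (hcells : mu.cells = insert (r, c) lam.cells) (a : ℕ) :
    mu.part a = if a = r then c else lam.part a := by
  rcases Nat.eq_zero_or_pos a with rfl | ha
  · rw [if_neg (by omega), mu.zero_at_zero, lam.zero_at_zero]
  · have key : ∀ b, 1 ≤ b → (b ≤ mu.part a ↔ ((a = r ∧ b = c) ∨ b ≤ lam.part a)) := by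
      intro b hb
      have h := Set.ext_iff.mp hcells (a, b)
      simp only [cells, Set.mem_insert_iff, Set.mem_setOf_eq, Prod.mk.injEq] at h
      constructor
      · intro hle
        rcases h.mp ⟨ha, hb, hle⟩ with h1 | h1
        · exact Or.inl h1
        · exact Or.inr h1.2.2
      · rintro (⟨h1, h2⟩ | h1)
        · exact (h.mpr (Or.inl ⟨h1, h2⟩)).2.2
        · exact (h.mpr (Or.inr ⟨ha, hb, h1⟩)).2.2
    by_cases har : a = r
    · subst har
      rw [if_pos rfl]
      apply nat_eq_of_le_iff
      intro b hb
      have k := key b hb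
      omega
    · rw [if_neg har]
      apply nat_eq_of_le_iff
      intro b hb
      have k := key b hb
      omega

lemma part_of_erase {lam mu : YPartition} {r c : ℕ} (hr : 1 ≤ r) (hc : lam.part r = c)
    (hc1 : 1 ≤ c) (hcells : mu.cells = lam.cells \ {(r, c)}) (a : ℕ) :
    mu.part a = if a = r then c - 1 else lam.part a := by
  rcases Nat.eq_zero_or_pos a with rfl | ha
  · rw [if_neg (by omega), mu.zero_at_zero, lam.zero_at_zero]
  · have key : ∀ b, 1 ≤ b → (b ≤ mu.part a ↔ (b ≤ lam.part a ∧ ¬(a = r ∧ b = c))) := by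
      intro b hb
      have h := Set.ext_iff.mp hcells (a, b)
      simp only [cells, Set.mem_diff, Set.mem_singleton_iff, Set.mem_setOf_eq,
        Prod.mk.injEq] at h
      constructor
      · intro hle
        have h1 := h.mp ⟨ha, hb, hle⟩
        exact ⟨h1.1.2.2, h1.2⟩
      · rintro ⟨h1, h2⟩
        exact (h.mpr ⟨⟨ha, hb, h1⟩, h2⟩).2.2
    by_cases har : a = r
    · subst har
      rw [if_pos rfl]
      apply nat_eq_of_le_iff
      intro b hb
      have k := key b hb
      omega
    · rw [if_neg har]
      apply nat_eq_of_le_iff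
      intro b hb
      have k := key b hb
      omega

lemma stepF {ℓ i : ℕ} {lam mu : YPartition} {p : ℕ × ℕ}
    (hp : p ∈ AddableRes ℓ i lam) (hcells : mu.cells = insert p lam.cells) :
    (AddableRes ℓ i lam \ {p} ⊆ AddableRes ℓ i mu) ∧ p ∈ RemovableRes ℓ i mu := by
  obtain ⟨r, c⟩ := p
  obtain ⟨⟨hr, hc, hcond⟩, hres⟩ := hp
  dsimp only at hr hc hcond hres
  have hpart := part_of_insert hr (by omega) hcells
  constructor
  · rintro ⟨a, b⟩ ⟨⟨⟨ha, hbdef, hcnd⟩, hres'⟩, hne⟩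
    dsimp only at ha hbdef hcnd hres'
    have hane : a ≠ r := by
      intro h
      rw [h] at hbdef
      apply hne
      show (a, b) = (r, c)
      rw [h]
      have : b = c := by omega
      rw [this]
    refine ⟨⟨ha, ?_, ?_⟩, hres'⟩
    · show b = mu.part a + 1
      rw [hpart a, if_neg hane]
      exact hbdef
    · show a = 1 ∨ b ≤ mu.part (a - 1)
      rcases hcnd with h1 | h1
      · exact Or.inl h1
      · right
        rw [hpart (a - 1)]
        by_cases h2 : a - 1 = r
        · rw [if_pos h2]
          rw [h2] at h1
          omega
        · rw [if_neg h2]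
          exact h1
  · refine ⟨⟨hr, ?_, ?_⟩, hres⟩
    · show c = mu.part r
      rw [hpart r, if_pos rfl]
    · show mu.part (r + 1) < c
      rw [hpart (r + 1), if_neg (by omega)]
      have := part_anti lam hr (show r ≤ r + 1 by omega)
      omega

lemma stepF_count {ℓ i : ℕ} {lam mu : YPartition} {p : ℕ × ℕ}
    (hp : p ∈ AddableRes ℓ i lam) (hcells : mu.cells = insert p lam.cells) :
    (AddableRes ℓ i lam).ncard ≤ (AddableRes ℓ i mu).ncard + 1 := by
  have h1 := Set.ncard_le_ncard (stepF hp hcells).1 (addableRes_finite ℓ i mu)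
  have h2 := Set.ncard_diff_singleton_add_one hp (addableRes_finite ℓ i lam)
  omega

lemma stepE {ℓ i : ℕ} (hℓ : 2 ≤ ℓ) {lam mu : YPartition} {p : ℕ × ℕ}
    (hp : p ∈ RemovableRes ℓ i lam) (hcells : mu.cells = lam.cells \ {p}) :
    (RemovableRes ℓ i lam \ {p} ⊆ RemovableRes ℓ i mu) ∧
    (AddableRes ℓ i lam ⊆ AddableRes ℓ i mu) ∧ p ∈ AddableRes ℓ i mu ∧
    p ∉ AddableRes ℓ i lam := by
  obtain ⟨r, c⟩ := p
  obtain ⟨⟨hr, hc, hlt⟩, hres⟩ := hp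
  dsimp only at hr hc hlt hres
  have hc1 : 1 ≤ c := by omega
  have hpart := part_of_erase hr hc.symm hc1 hcells
  refine ⟨?_, ?_, ?_, ?_⟩
  · rintro ⟨a, b⟩ ⟨⟨⟨ha, hb, hlt'⟩, hres'⟩, hne⟩
    dsimp only at ha hb hlt' hres'
    have hane : a ≠ r := by
      intro h
      rw [h] at hb
      apply hne
      show (a, b) = (r, c)
      rw [h]
      have : b = c := by omega
      rw [this]
    refine ⟨⟨ha, ?_, ?_⟩, hres'⟩
    · show b = mu.part a
      rw [hpart a, if_neg hane]
      exact hb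
    · show mu.part (a + 1) < b
      rw [hpart (a + 1)]
      by_cases h2 : a + 1 = r
      · rw [if_pos h2]
        rw [h2] at hlt'
        omega
      · rw [if_neg h2]
        exact hlt'
  · rintro ⟨a, b⟩ ⟨⟨ha, hb, hcnd⟩, hres'⟩
    dsimp only at ha hb hcnd hres'
    have hane : a ≠ r := by
      intro h
      rw [h] at hb
      have hd := res_dvd' (show 0 < ℓ by omega) (hres'.trans hres.symm)
      have he : ((b : ℤ) - a) - ((c : ℤ) - r) = 1 := by omega
      rw [he] at hd
      have := Int.le_of_dvd one_pos hd
      omega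
    refine ⟨⟨ha, ?_, ?_⟩, hres'⟩
    · show b = mu.part a + 1
      rw [hpart a, if_neg hane]
      exact hb
    · show a = 1 ∨ b ≤ mu.part (a - 1)
      rcases hcnd with h1 | h1
      · exact Or.inl h1
      · right
        rw [hpart (a - 1)]
        by_cases h2 : a - 1 = r
        · rw [if_pos h2]
          rw [h2] at h1
          have hbc : b ≠ c := by
            intro hbc
            have haa : a = r + 1 := by omega
            have hd := res_dvd' (show 0 < ℓ by omega) (hres'.trans hres.symm)
            have he : ((b : ℤ) - a) - ((c : ℤ) - r) = -1 := by omega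
            rw [he] at hd
            have hd1 : (ℓ : ℤ) ∣ 1 := (dvd_neg.mp hd)
            have := Int.le_of_dvd one_pos hd1
            omega
          omega
        · rw [if_neg h2]
          exact h1
  · refine ⟨⟨hr, ?_, ?_⟩, hres⟩
    · show c = mu.part r + 1
      rw [hpart r, if_pos rfl]
      omega
    · show r = 1 ∨ c ≤ mu.part (r - 1)
      by_cases h2 : r = 1
      · exact Or.inl h2
      · right
        rw [hpart (r - 1), if_neg (by omega)]
        have := part_anti lam (show 1 ≤ r - 1 by omega) (show r - 1 ≤ r by omega)
        omega
  · intro hmem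
    obtain ⟨⟨ha2, hb2, hcnd2⟩, hres2⟩ := hmem
    dsimp only at hb2
    omega

lemma main_notJM {ℓ i : ℕ} (hℓ : 2 < ℓ) {ν : YPartition} {r' c' r1 c1 r2 c2 : ℕ}
    (hq : (r', c') ∈ RemovableRes ℓ i ν)
    (h1 : (r1, c1) ∈ AddableRes ℓ i ν)
    (h2 : (r2, c2) ∈ AddableRes ℓ i ν)
    (hrr : r2 < r1) : ¬ IsJM ℓ ν := by
  obtain ⟨⟨hr', hc', hlt'⟩, hres'⟩ := hq
  obtain ⟨⟨hr1, hc1, hcnd1⟩, hres1⟩ := h1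
  obtain ⟨⟨hr2, hc2, hcnd2⟩, hres2⟩ := h2
  dsimp only at hr' hc' hlt' hres' hr1 hc1 hcnd1 hres1 hr2 hc2 hcnd2 hres2
  have hc'1 : 1 ≤ c' := by omega
  have hr1' : 2 ≤ r1 := by omega
  have hp12 : ν.part r1 ≤ ν.part r2 := part_anti ν hr2 (le_of_lt hrr)
  have hcnd1' : c1 ≤ ν.part (r1 - 1) := by
    rcases hcnd1 with h | h
    · omega
    · exact h
  have hanti12 : ν.part (r1 - 1) ≤ ν.part r2 := part_anti ν hr2 (by omega)
  have hc12 : c1 < c2 := by omega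
  have hl0 : 0 < ℓ := by omega
  have d1 : (ℓ : ℤ) ∣ ((c1 : ℤ) - r1) - ((c' : ℤ) - r') := res_dvd' hl0 (hres1.trans hres'.symm)
  have d2 : (ℓ : ℤ) ∣ ((c2 : ℤ) - r2) - ((c' : ℤ) - r') := res_dvd' hl0 (hres2.trans hres'.symm)
  have d12 : (ℓ : ℤ) ∣ ((c2 : ℤ) - r2) - ((c1 : ℤ) - r1) := by
    have h3 := dvd_sub d2 d1
    have he : ((c2 : ℤ) - r2) - ((c' : ℤ) - r') - (((c1 : ℤ) - r1) - ((c' : ℤ) - r'))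
        = ((c2 : ℤ) - r2) - ((c1 : ℤ) - r1) := by ring
    rwa [he] at h3
  have hcolq : ν.colLen c' = r' := colLen_eq ν
    (fun a ha har => by have := part_anti ν ha har; omega)
    (fun a haa => by
      have := part_anti ν (show 1 ≤ r' + 1 by omega) (show r' + 1 ≤ a by omega)
      omega)
  have hcol1 : ν.colLen c1 = r1 - 1 := colLen_eq ν
    (fun a ha har => by have := part_anti ν ha har; omega)
    (fun a haa => by
      have := part_anti ν hr1 (show r1 ≤ a by omega)
      omega)
  have hne2 : r' ≠ r2 := by
    intro h
    have e1 : c' = ν.part r2 := by rw [← h]; exact hc'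
    have he : ((c2 : ℤ) - r2) - ((c' : ℤ) - r') = 1 := by omega
    rw [he] at d2
    have := Int.le_of_dvd one_pos d2
    omega
  -- hook computations
  have hCorner : ν.hook r' c' = 1 := by
    show ν.part r' - c' + (ν.colLen c' - r') + 1 = 1
    rw [hcolq]
    omega
  have hcornerND : ¬ ℓ ∣ ν.hook r' c' := by
    rw [hCorner]
    intro hdvd
    have := Nat.le_of_dvd one_pos hdvd
    omega
  have memq : (r', c') ∈ ν.cells := by
    show 1 ≤ r' ∧ 1 ≤ c' ∧ c' ≤ ν.part r'
    omega
  have eB : ν.hook r2 c1 + (c1 + r2) + 1 = c2 + r1 := by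
    show ν.part r2 - c1 + (ν.colLen c1 - r2) + 1 + (c1 + r2) + 1 = c2 + r1
    rw [hcol1]
    omega
  have hBND : ¬ ℓ ∣ ν.hook r2 c1 := by
    intro hdvd
    have hdz : (ℓ : ℤ) ∣ (ν.hook r2 c1 : ℤ) := Int.natCast_dvd_natCast.mpr hdvd
    have hcast : ((ν.hook r2 c1 : ℤ)) + (c1 + r2) + 1 = c2 + r1 := by exact_mod_cast eB
    have h3 : (1 : ℤ) = (((c2 : ℤ) - r2) - ((c1 : ℤ) - r1)) - (ν.hook r2 c1 : ℤ) := by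
      linarith [hcast]
    have hd1 : (ℓ : ℤ) ∣ 1 := by rw [h3]; exact dvd_sub d12 hdz
    have := Int.le_of_dvd one_pos hd1
    omega
  have memB : (r2, c1) ∈ ν.cells := by
    show 1 ≤ r2 ∧ 1 ≤ c1 ∧ c1 ≤ ν.part r2
    omega
  intro hJM
  apply hJM
  rcases lt_or_gt_of_ne hne2 with hcase | hcase
  · -- r' < r2 : witness (a, b, y, x) = (r', c1, c', r2)
    have hpr' : ν.part r2 ≤ ν.part r' := part_anti ν hr' (le_of_lt hcase)
    have eA : ν.hook r' c1 + (c1 + r') = c' + r1 := by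
      show ν.part r' - c1 + (ν.colLen c1 - r') + 1 + (c1 + r') = c' + r1
      rw [hcol1]
      omega
    have hAD : ℓ ∣ ν.hook r' c1 := by
      apply Int.natCast_dvd_natCast.mp
      obtain ⟨t, ht⟩ := d1
      refine ⟨-t, ?_⟩
      have hcast : ((ν.hook r' c1 : ℤ)) + (c1 + r') = c' + r1 := by exact_mod_cast eA
      have : (ℓ : ℤ) * -t = -((ℓ : ℤ) * t) := by ring
      rw [this, ← ht]
      linarith [hcast]
    refine ⟨r', c1, c', r2, ?_, memq, memB, hAD, hcornerND, hBND⟩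
    show 1 ≤ r' ∧ 1 ≤ c1 ∧ c1 ≤ ν.part r'
    omega
  · -- r2 < r' : witness (a, b, y, x) = (r2, c', c1, r')
    have hpr' : ν.part r' ≤ ν.part r2 := part_anti ν hr2 (le_of_lt hcase)
    have eC : ν.hook r2 c' + (c' + r2) = c2 + r' := by
      show ν.part r2 - c' + (ν.colLen c' - r2) + 1 + (c' + r2) = c2 + r'
      rw [hcolq]
      omega
    have hCD : ℓ ∣ ν.hook r2 c' := by
      apply Int.natCast_dvd_natCast.mp
      obtain ⟨t, ht⟩ := d2
      refine ⟨t, ?_⟩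
      have hcast : ((ν.hook r2 c' : ℤ)) + (c' + r2) = c2 + r' := by exact_mod_cast eC
      rw [← ht]
      linarith [hcast]
    refine ⟨r2, c', c1, r', ?_, memB, memq, hCD, hBND, hcornerND⟩
    show 1 ≤ r2 ∧ 1 ≤ c' ∧ c' ≤ ν.part r2
    omega

lemma f_chain {ℓ i : ℕ} (k : ℕ) : ∀ (lam mu : YPartition), RelIter (HatF ℓ i) k lam mu →
    (AddableRes ℓ i lam).ncard ≤ (AddableRes ℓ i mu).ncard + k := by
  induction k with
  | zero =>
    intro lam mu h
    have he : lam = mu := h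
    subst he
    omega
  | succ n ih =>
    intro lam mu h
    obtain ⟨c, ⟨p, hcog, hcells⟩, hrest⟩ := h
    have h1 := stepF_count hcog.1.1 hcells
    have h2 := ih c mu hrest
    omega

lemma f_rem {ℓ i : ℕ} (k : ℕ) : 0 < k → ∀ (lam mu : YPartition), RelIter (HatF ℓ i) k lam mu →
    ∃ q, q ∈ RemovableRes ℓ i mu := by
  induction k with
  | zero => omega
  | succ n ih =>
    intro _ lam mu h
    obtain ⟨c, ⟨p, hcog, hcells⟩, hrest⟩ := h
    rcases Nat.eq_zero_or_pos n with rfl | hn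
    · have he : c = mu := hrest
      subst he
      exact ⟨p, (stepF hcog.1.1 hcells).2⟩
    · exact ih hn c mu hrest

lemma e_chain {ℓ i : ℕ} (hℓ : 2 ≤ ℓ) (k : ℕ) :
    ∀ (lam mu : YPartition), RelIter (HatE ℓ i) k lam mu →
    (RemovableRes ℓ i lam).ncard ≤ (RemovableRes ℓ i mu).ncard + k ∧
    (AddableRes ℓ i lam).ncard + k ≤ (AddableRes ℓ i mu).ncard := by
  induction k with
  | zero =>
    intro lam mu h
    have he : lam = mu := h
    subst he
    omega
  | succ n ih =>
    intro lam mu h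
    obtain ⟨c, ⟨p, hgood, hcells⟩, hrest⟩ := h
    have hp : p ∈ RemovableRes ℓ i lam := hgood.1.1
    obtain ⟨hsub, haddsub, hpadd, hpnot⟩ := stepE hℓ hp hcells
    have hR : (RemovableRes ℓ i lam).ncard ≤ (RemovableRes ℓ i c).ncard + 1 := by
      have h1 := Set.ncard_le_ncard hsub (removableRes_finite ℓ i c)
      have h2 := Set.ncard_diff_singleton_add_one hp (removableRes_finite ℓ i lam)
      omega
    have hA : (AddableRes ℓ i lam).ncard + 1 ≤ (AddableRes ℓ i c).ncard := by
      have hsub2 : insert p (AddableRes ℓ i lam) ⊆ AddableRes ℓ i c :=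
        Set.insert_subset hpadd haddsub
      have h1 := Set.ncard_le_ncard hsub2 (addableRes_finite ℓ i c)
      rw [Set.ncard_insert_of_notMem hpnot (addableRes_finite ℓ i lam)] at h1
      omega
    obtain ⟨i1, i2⟩ := ih c mu hrest
    exact ⟨by omega, by omega⟩

lemma hatPhi_le (ℓ i : ℕ) (lam : YPartition) : hatPhi ℓ i lam ≤ (AddableRes ℓ i lam).ncard :=
  Set.ncard_le_ncard (fun p hp => hp.1) (addableRes_finite ℓ i lam)

lemma hatEps_le (ℓ i : ℕ) (lam : YPartition) : hatEps ℓ i lam ≤ (RemovableRes ℓ i lam).ncard :=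
  Set.ncard_le_ncard (fun p hp => hp.1) (removableRes_finite ℓ i lam)

lemma finish {ℓ i : ℕ} (hℓ : 2 < ℓ) {mu : YPartition}
    (hq : ∃ q, q ∈ RemovableRes ℓ i mu)
    (h2 : 1 < (AddableRes ℓ i mu).ncard) : ¬ IsJM ℓ mu := by
  obtain ⟨⟨aq, bq⟩, hqm⟩ := hq
  obtain ⟨⟨a1, b1⟩, hp1, ⟨a2, b2⟩, hp2, hne⟩ :=
    (Set.one_lt_ncard (addableRes_finite ℓ i mu)).mp h2
  have hrow : a1 ≠ a2 := by
    intro h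
    have e1 : b1 = mu.part a1 + 1 := hp1.1.2.1
    have e2 : b2 = mu.part a2 + 1 := hp2.1.2.1
    have hb : b1 = b2 := by rw [e1, e2, h]
    exact hne (by rw [h, hb])
  rcases Nat.lt_or_ge a2 a1 with h | h
  · exact main_notJM hℓ hqm hp1 hp2 h
  · exact main_notJM hℓ hqm hp2 hp1 (by omega)

end St14

open St14 in
/-- if `λ` is an `(ℓ,0)`-JM partition, then `f̂_i^k λ` is not an
`(ℓ,0)`-JM partition for `0 < k < φ̂_i(λ) − 1`, and `ê_i^k λ` is not an `(ℓ,0)`-JM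
partition for `1 < k < ε̂_i(λ)`. -/
theorem statement14 (ℓ : ℕ) (hℓ : 2 < ℓ) (i : ℕ) (hi : i < ℓ) (lam : YPartition)
    (hJM : IsJM ℓ lam) :
    (∀ k : ℕ, 0 < k → k < hatPhi ℓ i lam - 1 →
      ∀ mu : YPartition, RelIter (HatF ℓ i) k lam mu → ¬ IsJM ℓ mu) ∧
    (∀ k : ℕ, 1 < k → k < hatEps ℓ i lam →
      ∀ mu : YPartition, RelIter (HatE ℓ i) k lam mu → ¬ IsJM ℓ mu) := by
  constructor
  · intro k hk0 hk mu hiter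
    have hphi := hatPhi_le ℓ i lam
    have hcount := f_chain k lam mu hiter
    refine finish hℓ (f_rem k hk0 lam mu hiter) (by omega)
  · intro k hk1 hk mu hiter
    have heps := hatEps_le ℓ i lam
    obtain ⟨hR, hA⟩ := e_chain (by omega) k lam mu hiter
    have hne : (RemovableRes ℓ i mu).ncard ≠ 0 := by omega
    obtain ⟨q, hqm⟩ := Set.nonempty_of_ncard_ne_zero hne
    exact finish hℓ ⟨q, hqm⟩ (by omega)
end
end

section
/- Fix an integer ℓ > 2. If λ is an ℓ-regular partition, then for every residue i with 0 ≤ i < ℓ there do not exist positions (a,b) and (c,d) on the same ladder with a < c such that (a,b) is an addable i-box of λ and (c,d) is a removable i-box of λ. -/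
noncomputable section

open YPartition
/-- if `λ` is `ℓ`-regular, then no ladder contains an addable `i`-box of `λ`
strictly above a removable `i`-box of `λ`. -/
theorem statement16 (ℓ : ℕ) (hℓ : 2 < ℓ) (lam : YPartition) (hreg : IsRegular ℓ lam) :
    ∀ i : ℕ, i < ℓ →
      ¬ ∃ p q : ℕ × ℕ, p ∈ AddableRes ℓ i lam ∧ q ∈ RemovableRes ℓ i lam ∧
        SameLadder ℓ p q ∧ p.1 < q.1 := by
  intro i _ ⟨p, q, hpA, hqR, hlad, hlt⟩
  obtain ⟨a, b⟩ := p
  obtain ⟨c, d⟩ := q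
  obtain ⟨⟨ha1, hb, _⟩, _⟩ := hpA
  obtain ⟨⟨hc1, hd, hdpos'⟩, _⟩ := hqR
  simp only at hb hd hdpos' hlt ha1 hc1
  unfold SameLadder at hlad
  simp only at hlad
  -- derive d < b and c = a + (ℓ-1) * (b-d)
  have hℓ1 : (0:ℤ) < (ℓ:ℤ) - 1 := by
    have : (2:ℤ) < (ℓ:ℤ) := by exact_mod_cast hℓ
    linarith
  have hdb : d < b := by
    by_contra hdb
    push_neg at hdb
    have h1 : (0:ℤ) < (c:ℤ) - (a:ℤ) := by
      have : (a:ℤ) < (c:ℤ) := by exact_mod_cast hlt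
      linarith
    have h2 : ((b:ℤ) - (d:ℤ)) ≤ 0 := by
      have : (b:ℤ) ≤ (d:ℤ) := by exact_mod_cast hdb
      linarith
    nlinarith
  set k := b - d with hk
  have hkpos : 1 ≤ k := by omega
  have hc : c = a + (ℓ - 1) * k := by
    have h1 : ((b:ℤ) - (d:ℤ)) = ((k:ℕ):ℤ) := by
      have : d ≤ b := le_of_lt hdb
      push_cast [hk]
      omega
    have h2 : ((ℓ:ℤ) - 1) = (((ℓ-1:ℕ)):ℤ) := by
      have : 1 ≤ ℓ := by omega
      omega
    rw [h1, h2] at hlad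
    have : (c:ℤ) = (a:ℤ) + ((ℓ - 1 : ℕ):ℤ) * ((k:ℕ):ℤ) := by linarith
    exact_mod_cast this
  have hdpos : 1 ≤ d := by omega
  -- main induction: part drops by ≥ 1 every (ℓ-1) rows
  have key : ∀ j : ℕ, j ≤ k → lam.part (a + (ℓ - 1) * j) + j ≤ lam.part a := by
    intro j hj
    induction j with
    | zero => simp
    | succ n ih =>
      have hn : n ≤ k := by omega
      have ihn := ih hn
      have hle : a + (ℓ - 1) * (n + 1) ≤ c := by
        rw [hc]
        have : (ℓ - 1) * (n+1) ≤ (ℓ - 1) * k := by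
          apply Nat.mul_le_mul_left
          omega
        omega
      have hpos : 0 < lam.part (a + (ℓ - 1) * (n + 1)) := by
        have := lam.antitone (a + (ℓ - 1) * (n + 1)) c (by omega) hle
        omega
      have hstep := hreg (a + (ℓ - 1) * n) (by omega) (by
        have : a + (ℓ - 1) * n + (ℓ - 1) = a + (ℓ - 1) * (n + 1) := by ring
        rw [this]
        exact hpos)
      have heq : a + (ℓ - 1) * n + (ℓ - 1) = a + (ℓ - 1) * (n + 1) := by ring
      rw [heq] at hstep
      omega
  have hfin := key k le_rfl
  rw [← hc] at hfin
  omega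
end
end
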